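/- Let R be an invertible d×d matrix, μ ∈ ℝ^d with R⁻¹μ < 0, Σ symmetric positive definite, and θ^{(i,r)} = Δ_i B^{(i)} where B = (R⁻¹)ᵀ and Δ_i = -2⟨μ, B^{(i)}⟩/⟨B^{(i)}, Σ B^{(i)}⟩. If R is a P-matrix, then for all i < j, the 2×2 matrix A^{ij} with entries A^{ij} = [[θ^{(i,r)}_i, θ^{(j,r)}_i],[θ^{(i,r)}_j, θ^{(j,r)}_j]] has positive determinant. -/

import Mathlib

open Matrix

/-- A real square matrix is a P-matrix if every principal minor is positive. -/
def IsPMatrix {d : ℕ} (A : Matrix (Fin d) (Fin d) ℝ) : Prop :=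
  ∀ s : Finset (Fin d),
    0 < (A.submatrix (fun i : s => (i : Fin d)) (fun j : s => (j : Fin d))).det

lemma jacobi_aux {n : Type*} [Fintype n] [DecidableEq n] (A : Matrix n n ℝ)
    (p : n → Prop) [DecidablePred p] (hA : IsUnit A.det)
    (hD : IsUnit (A.submatrix (fun x : {x // ¬ p x} => (x : n))
      (fun x : {x // ¬ p x} => (x : n))).det) :
    ((A⁻¹).submatrix (fun x : {x // p x} => (x : n)) (fun x : {x // p x} => (x : n))).det * A.det
      = (A.submatrix (fun x : {x // ¬ p x} => (x : n)) (fun x : {x // ¬ p x} => (x : n))).det := by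
  classical
  set e := Equiv.sumCompl p with he
  set a : Matrix {x // p x} {x // p x} ℝ := A.submatrix (fun x => (x : n)) (fun x => (x : n)) with ha
  set b : Matrix {x // p x} {x // ¬ p x} ℝ := A.submatrix (fun x => (x : n)) (fun x => (x : n)) with hb
  set c : Matrix {x // ¬ p x} {x // p x} ℝ := A.submatrix (fun x => (x : n)) (fun x => (x : n)) with hc
  set dd : Matrix {x // ¬ p x} {x // ¬ p x} ℝ := A.submatrix (fun x => (x : n)) (fun x => (x : n)) with hd
  have hN : A.submatrix e e = fromBlocks a b c dd := by
    ext (x | x) (y | y) <;> rfl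
  haveI : Invertible dd := dd.invertibleOfIsUnitDet hD
  haveI hNinv : Invertible (fromBlocks a b c dd) := by
    refine (fromBlocks a b c dd).invertibleOfIsUnitDet ?_
    rw [← hN, det_submatrix_equiv_self]
    exact hA
  haveI : Invertible (a - b * ⅟dd * c) := invertibleOfFromBlocks₂₂Invertible a b c dd
  have hblock : ⅟(fromBlocks a b c dd) =
      fromBlocks (⅟ (a - b * ⅟ dd * c)) (-(⅟ (a - b * ⅟ dd * c) * b * ⅟ dd))
        (-(⅟ dd * c * ⅟ (a - b * ⅟ dd * c)))
        (⅟ dd + ⅟ dd * c * ⅟ (a - b * ⅟ dd * c) * b * ⅟ dd) :=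
    invOf_fromBlocks₂₂_eq a b c dd
  have hsub : (A⁻¹).submatrix (fun x : {x // p x} => (x : n)) (fun x : {x // p x} => (x : n))
      = ⅟ (a - b * ⅟ dd * c) := by
    ext x y
    have h1 : (A.submatrix e e)⁻¹ = (A⁻¹).submatrix e e := inv_submatrix_equiv A e e
    have h2 : (A.submatrix e e)⁻¹ = ⅟(fromBlocks a b c dd) := by
      rw [hN, invOf_eq_nonsing_inv]
    have := congrFun (congrFun (h1.symm.trans (h2.trans hblock)) (Sum.inl x)) (Sum.inl y)
    simpa [he] using this
  have hdet : A.det = dd.det * (a - b * ⅟ dd * c).det := by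
    rw [← det_submatrix_equiv_self e A, hN, det_fromBlocks₂₂]
  have hx : (a - b * ⅟ dd * c).det ≠ 0 :=
    (isUnit_det_of_invertible _).ne_zero
  rw [hsub, hdet, invOf_eq_nonsing_inv, det_nonsing_inv, Ring.inverse_eq_inv']
  rw [mul_comm dd.det, ← mul_assoc, inv_mul_cancel₀ hx, one_mul]

lemma det_inst {α : Type*} [DecidableEq α] {i1 i2 : Fintype α} (M : Matrix α α ℝ) :
    @Matrix.det α _ i1 ℝ _ M = @Matrix.det α _ i2 ℝ _ M := by
  rw [Subsingleton.elim i1 i2]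

theorem cij_positive_of_pmatrix {d : ℕ}
    (S : Matrix (Fin d) (Fin d) ℝ) (hS : S.PosDef)
    (μ : Fin d → ℝ) (R : Matrix (Fin d) (Fin d) ℝ)
    (hR : IsUnit R.det) (hμ : ∀ i, (R⁻¹.mulVec μ) i < 0)
    (B : Fin d → Fin d → ℝ) (hB : ∀ i k, B i k = (R⁻¹)ᵀ k i)
    (Δ : Fin d → ℝ) (hΔ : ∀ i, Δ i = -2 * (μ ⬝ᵥ B i) / (B i ⬝ᵥ S.mulVec (B i)))
    (θr : Fin d → Fin d → ℝ) (hθr : ∀ i, θr i = Δ i • B i)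
    (hP : IsPMatrix R) :
    ∀ i j : Fin d, i < j →
      0 < (!![θr i i, θr j i; θr i j, θr j j] : Matrix (Fin 2) (Fin 2) ℝ).det := by
  intro i j hij
  have hij' : i ≠ j := hij.ne
  have hBR : ∀ i k, B i k = R⁻¹ i k := fun i k => hB i k
  -- Δ positivity
  have hΔpos : ∀ k, 0 < Δ k := by
    intro k
    have hdot : μ ⬝ᵥ B k = (R⁻¹.mulVec μ) k := by
      simp only [dotProduct, mulVec, dotProduct]
      exact Finset.sum_congr rfl fun x _ => by rw [hBR, mul_comm]
    have hnum : 0 < -2 * (μ ⬝ᵥ B k) := by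
      have := hμ k; rw [hdot]; nlinarith
    have hBne : B k ≠ 0 := by
      intro h0
      have : (R⁻¹.mulVec μ) k = 0 := by
        simp only [mulVec, dotProduct]
        refine Finset.sum_eq_zero fun x _ => ?_
        have : B k x = 0 := by rw [h0]; rfl
        rw [hBR] at this; rw [this, zero_mul]
      linarith [hμ k]
    have hden : 0 < B k ⬝ᵥ S.mulVec (B k) := by
      have := hS.dotProduct_mulVec_pos hBne
      simpa using this
    rw [hΔ]; exact div_pos hnum hden
  -- minor of R⁻¹
  set p : Fin d → Prop := fun x => x ∈ ({i, j} : Finset (Fin d)) with hp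
  have hdetR : 0 < R.det := by
    have h := hP Finset.univ
    rwa [show (R.submatrix (fun i : (Finset.univ : Finset (Fin d)) => (i : Fin d))
        (fun j : (Finset.univ : Finset (Fin d)) => (j : Fin d)))
      = R.submatrix (Equiv.subtypeUnivEquiv Finset.mem_univ)
          (Equiv.subtypeUnivEquiv Finset.mem_univ) from rfl,
      det_submatrix_equiv_self] at h
  have hDpos : 0 < (R.submatrix (fun x : {x // ¬ p x} => (x : Fin d))
      (fun x : {x // ¬ p x} => (x : Fin d))).det := by
    have h := hP ({i, j}ᶜ : Finset (Fin d))
    let e' : {x // ¬ p x} ≃ (({i, j}ᶜ : Finset (Fin d)) : Type) :=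
      Equiv.subtypeEquivRight fun x => by simp [hp]
    have : (R.submatrix (fun i : (({i, j}ᶜ : Finset (Fin d)) : Type) => (i : Fin d))
        (fun j : (({i, j}ᶜ : Finset (Fin d)) : Type) => (j : Fin d))).submatrix e' e'
        = R.submatrix (fun x : {x // ¬ p x} => (x : Fin d))
          (fun x : {x // ¬ p x} => (x : Fin d)) := by
      ext x y; simp [e', Equiv.subtypeEquivRight]; rfl
    rw [← this, det_submatrix_equiv_self]
    exact h
  have hjac := jacobi_aux R p hR hDpos.ne'.isUnit
  -- compute the 2x2 minor det
  have hi : i ∈ ({i, j} : Finset (Fin d)) := by simp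
  have hj : j ∈ ({i, j} : Finset (Fin d)) := by simp
  let e2 : Fin 2 ≃ {x // p x} :=
    { toFun := ![⟨i, hi⟩, ⟨j, hj⟩]
      invFun := fun x => if (x : Fin d) = i then 0 else 1
      left_inv := by
        intro x
        fin_cases x
        · simp
        · simp [hij'.symm]
      right_inv := by
        rintro ⟨x, hx⟩
        simp only [hp, Finset.mem_insert, Finset.mem_singleton] at hx
        rcases hx with rfl | rfl
        · simp
        · simp [hij'.symm] }
  have hminor : ((R⁻¹).submatrix (fun x : {x // p x} => (x : Fin d))
      (fun x : {x // p x} => (x : Fin d))).det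
      = R⁻¹ i i * R⁻¹ j j - R⁻¹ i j * R⁻¹ j i := by
    rw [← det_submatrix_equiv_self e2, det_fin_two]
    simp [e2]
  have hbridge : @Matrix.det {x // p x} _ (Subtype.fintype p) ℝ _
      ((R⁻¹).submatrix (fun x : {x // p x} => (x : Fin d))
        (fun x : {x // p x} => (x : Fin d)))
      = R⁻¹ i i * R⁻¹ j j - R⁻¹ i j * R⁻¹ j i := (det_inst _).trans hminor
  rw [hbridge] at hjac
  have hmpos : 0 < R⁻¹ i i * R⁻¹ j j - R⁻¹ i j * R⁻¹ j i := by
    have := hjac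
    nlinarith [hdetR, hDpos]
  -- final computation
  rw [det_fin_two_of]
  have hent : ∀ a b, θr a b = Δ a * R⁻¹ a b := by
    intro a b; rw [hθr, Pi.smul_apply, smul_eq_mul, hBR]
  rw [hent, hent, hent, hent]
  have : Δ i * R⁻¹ i i * (Δ j * R⁻¹ j j) - Δ j * R⁻¹ j i * (Δ i * R⁻¹ i j)
      = Δ i * Δ j * (R⁻¹ i i * R⁻¹ j j - R⁻¹ i j * R⁻¹ j i) := by ring
  rw [this]
  exact mul_pos (mul_pos (hΔpos i) (hΔpos j)) hmpos
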